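/- For w≡1 and f:[a,b]×[c,d]→ℝ C² with |∂²f/∂t∂s| ≤ M, for all (x,y)∈[a,b]×[c,d]: |f(x,y) - (1/(b-a))∫_a^b f(t,y)dt - (1/(d-c))∫_c^d f(x,s)ds + (1/((b-a)(d-c)))∫_a^b∫_c^d f(t,s)ds dt| ≤ [(b-a)²/4+(x-(a+b)/2)²][(d-c)²/4+(y-(c+d)/2)²]·M/((b-a)(d-c)). -/

import Mathlib

open Set MeasureTheory intervalIntegral

-- ∫ |x - t| over [a,b]
lemma ostrowski_aux_abs_integral {a b x : ℝ} (hx : x ∈ Icc a b) :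
    (∫ t in a..b, |x - t|) = (b - a) ^ 2 / 4 + (x - (a + b) / 2) ^ 2 := by
  obtain ⟨hax, hxb⟩ := hx
  have h1 : (∫ t in a..x, |x - t|) = ∫ t in a..x, (x - t) := by
    apply integral_congr
    intro t ht
    rw [uIcc_of_le hax] at ht
    show |x - t| = x - t
    rw [abs_of_nonneg (by linarith [ht.1, ht.2])]
  have h2 : (∫ t in x..b, |x - t|) = ∫ t in x..b, (t - x) := by
    apply integral_congr
    intro t ht
    rw [uIcc_of_le hxb] at ht
    show |x - t| = t - x
    rw [abs_of_nonpos (by linarith [ht.1, ht.2]), neg_sub]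
  have hint1 : IntervalIntegrable (fun t => |x - t|) volume a x :=
    (continuous_const.sub continuous_id).abs.intervalIntegrable _ _
  have hint2 : IntervalIntegrable (fun t => |x - t|) volume x b :=
    (continuous_const.sub continuous_id).abs.intervalIntegrable _ _
  rw [← integral_add_adjacent_intervals hint1 hint2, h1, h2]
  have e1 : (∫ t in a..x, (x - t)) = (x - a) ^ 2 / 2 := by
    rw [integral_sub intervalIntegrable_const (intervalIntegral.intervalIntegrable_id),
      intervalIntegral.integral_const, integral_id, smul_eq_mul]
    ring
  have e2 : (∫ t in x..b, (t - x)) = (b - x) ^ 2 / 2 := by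
    rw [integral_sub (intervalIntegral.intervalIntegrable_id) intervalIntegrable_const,
      intervalIntegral.integral_const, integral_id, smul_eq_mul]
    ring
  rw [e1, e2]; ring

-- mixed second difference bound
lemma ostrowski_aux_mixed {a b c d M : ℝ} (fx fxy : ℝ → ℝ → ℝ) (f : ℝ → ℝ → ℝ)
    (hfx : ∀ x ∈ Icc a b, ∀ y ∈ Icc c d, HasDerivAt (fun t => f t y) (fx x y) x)
    (hfxy : ∀ x ∈ Icc a b, ∀ y ∈ Icc c d, HasDerivAt (fun s => fx x s) (fxy x y) y)
    (hM : ∀ x ∈ Icc a b, ∀ y ∈ Icc c d, |fxy x y| ≤ M)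
    {t₁ t₂ s₁ s₂ : ℝ} (ht₁ : t₁ ∈ Icc a b) (ht₂ : t₂ ∈ Icc a b)
    (hs₁ : s₁ ∈ Icc c d) (hs₂ : s₂ ∈ Icc c d) :
    |(f t₂ s₂ - f t₂ s₁) - (f t₁ s₂ - f t₁ s₁)| ≤ M * |s₂ - s₁| * |t₂ - t₁| := by
  have stepA : ∀ t ∈ Icc a b, ‖fx t s₂ - fx t s₁‖ ≤ M * ‖s₂ - s₁‖ := by
    intro t ht
    exact (convex_Icc c d).norm_image_sub_le_of_norm_hasDerivWithin_le
      (fun u hu => (hfxy t ht u hu).hasDerivWithinAt)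
      (fun u hu => hM t ht u hu) hs₁ hs₂
  have stepB := (convex_Icc a b).norm_image_sub_le_of_norm_hasDerivWithin_le
      (f := fun t => f t s₂ - f t s₁) (f' := fun t => fx t s₂ - fx t s₁)
      (fun t ht => ((hfx t ht s₂ hs₂).sub (hfx t ht s₁ hs₁)).hasDerivWithinAt)
      stepA ht₁ ht₂
  simpa [Real.norm_eq_abs, mul_assoc] using stepB

lemma ostrowski_aux_fubini {a b c d : ℝ} (hab : a ≤ b) (hcd : c ≤ d) (f : ℝ → ℝ → ℝ)
    (hfc : ContinuousOn (fun p : ℝ × ℝ => f p.1 p.2) (Icc a b ×ˢ Icc c d)) :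
    (∫ s in c..d, ∫ t in a..b, f t s) = ∫ t in a..b, ∫ s in c..d, f t s := by
  have hint : IntegrableOn (fun p : ℝ × ℝ => f p.1 p.2) (Icc a b ×ˢ Icc c d) volume :=
    hfc.integrableOn_compact (isCompact_Icc.prod isCompact_Icc)
  have hint2 : Integrable (Function.uncurry f)
      ((volume.restrict (Ioc a b)).prod (volume.restrict (Ioc c d))) := by
    rw [Measure.prod_restrict]
    have : IntegrableOn (Function.uncurry f) (Ioc a b ×ˢ Ioc c d) (volume.prod volume) := by
      apply IntegrableOn.mono_set _ (prod_mono Ioc_subset_Icc_self Ioc_subset_Icc_self)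
      rw [← Measure.volume_eq_prod]
      exact hint
    exact this
  simp only [intervalIntegral.integral_of_le hab, intervalIntegral.integral_of_le hcd]
  exact (MeasureTheory.integral_integral_swap hint2).symm

theorem ostrowski_double_unit_weight (a b c d M : ℝ) (hab : a < b) (hcd : c < d)
    (f fx fxy : ℝ → ℝ → ℝ)
    (hfc : ContinuousOn (fun p : ℝ × ℝ => f p.1 p.2) (Icc a b ×ˢ Icc c d))
    (hfx : ∀ x ∈ Icc a b, ∀ y ∈ Icc c d, HasDerivAt (fun t => f t y) (fx x y) x)
    (hfxy : ∀ x ∈ Icc a b, ∀ y ∈ Icc c d, HasDerivAt (fun s => fx x s) (fxy x y) y)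
    (hfxyc : ContinuousOn (fun p : ℝ × ℝ => fxy p.1 p.2) (Icc a b ×ˢ Icc c d))
    (hM : ∀ x ∈ Icc a b, ∀ y ∈ Icc c d, |fxy x y| ≤ M) :
    ∀ x ∈ Icc a b, ∀ y ∈ Icc c d,
      |f x y - (1 / (b - a)) * (∫ t in a..b, f t y) -
          (1 / (d - c)) * (∫ s in c..d, f x s) +
          (1 / ((b - a) * (d - c))) * ∫ t in a..b, ∫ s in c..d, f t s| ≤
        ((b - a) ^ 2 / 4 + (x - (a + b) / 2) ^ 2) *
          ((d - c) ^ 2 / 4 + (y - (c + d) / 2) ^ 2) * M / ((b - a) * (d - c)) := by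
  intro x hx y hy
  have hba : (0:ℝ) < b - a := by linarith
  have hdc : (0:ℝ) < d - c := by linarith
  have hM0 : 0 ≤ M := (abs_nonneg _).trans (hM x hx y hy)
  set C1 : ℝ := (b - a) ^ 2 / 4 + (x - (a + b) / 2) ^ 2 with hC1def
  set C2 : ℝ := (d - c) ^ 2 / 4 + (y - (c + d) / 2) ^ 2 with hC2def
  have hC1 : 0 ≤ C1 := by positivity
  have hC2 : 0 ≤ C2 := by positivity
  have hfcont1 : ∀ s ∈ Icc c d, ContinuousOn (fun t => f t s) (Icc a b) := by
    intro s hs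
    exact hfc.comp (Continuous.continuousOn (continuous_id.prodMk continuous_const)) (fun t ht => ⟨ht, hs⟩)
  have hfcont2 : ContinuousOn (fun s => f x s) (Icc c d) :=
    hfc.comp (Continuous.continuousOn (continuous_const.prodMk continuous_id)) (fun s hs => ⟨hx, hs⟩)
  have hfint : ∀ s ∈ Icc c d, IntervalIntegrable (fun t => f t s) volume a b := by
    intro s hs
    exact ContinuousOn.intervalIntegrable (by rw [uIcc_of_le hab.le]; exact hfcont1 s hs)
  have hfxint : IntervalIntegrable (fun s => f x s) volume c d :=
    ContinuousOn.intervalIntegrable (by rw [uIcc_of_le hcd.le]; exact hfcont2)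
  set J : ℝ → ℝ := fun s => ∫ t in a..b, f t s with hJ
  set K : ℝ → ℝ := fun s => (b - a) * f x s - J s with hK
  -- key Lipschitz-type estimate for K
  have key : ∀ s₁ ∈ Icc c d, ∀ s₂ ∈ Icc c d, |K s₂ - K s₁| ≤ M * C1 * |s₂ - s₁| := by
    intro s₁ hs₁ s₂ hs₂
    have heq : K s₂ - K s₁ = ∫ t in a..b, ((f x s₂ - f x s₁) - (f t s₂ - f t s₁)) := by
      rw [integral_sub intervalIntegrable_const ((hfint s₂ hs₂).sub (hfint s₁ hs₁)),
        intervalIntegral.integral_const, integral_sub (hfint s₂ hs₂) (hfint s₁ hs₁),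
        smul_eq_mul]
      simp only [hK, hJ]
      ring
    have hbd : ∀ t ∈ Icc a b, |(f x s₂ - f x s₁) - (f t s₂ - f t s₁)| ≤ M * |s₂ - s₁| * |x - t| :=
      fun t ht => ostrowski_aux_mixed fx fxy f hfx hfxy hM ht hx hs₁ hs₂
    have hbint : IntervalIntegrable (fun t => M * |s₂ - s₁| * |x - t|) volume a b :=
      (continuous_const.mul (continuous_const.sub continuous_id).abs).intervalIntegrable _ _
    have hle := intervalIntegral.norm_integral_le_of_norm_le
      (f := fun t => (f x s₂ - f x s₁) - (f t s₂ - f t s₁))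
      (g := fun t => M * |s₂ - s₁| * |x - t|) (μ := volume) (a := a) (b := b) hab.le
      (Filter.Eventually.of_forall (fun t ht => by
        rw [Real.norm_eq_abs]
        exact hbd t (Ioc_subset_Icc_self ht)))
      hbint
    rw [heq]
    calc |∫ t in a..b, ((f x s₂ - f x s₁) - (f t s₂ - f t s₁))|
        ≤ |(∫ t in a..b, M * |s₂ - s₁| * |x - t|)| := hle.trans (le_abs_self _)
      _ = M * |s₂ - s₁| * C1 := by
          rw [intervalIntegral.integral_const_mul, ostrowski_aux_abs_integral hx,
            abs_of_nonneg (by positivity)]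
      _ = M * C1 * |s₂ - s₁| := by ring
  have hKcont : ContinuousOn K (Icc c d) := by
    have : LipschitzOnWith (Real.toNNReal (M * C1)) K (Icc c d) := by
      apply LipschitzOnWith.of_dist_le_mul
      intro s₂ hs₂ s₁ hs₁
      rw [Real.dist_eq, Real.dist_eq, Real.coe_toNNReal _ (by positivity)]
      exact key s₁ hs₁ s₂ hs₂
    exact this.continuousOn
  have hKint : IntervalIntegrable K volume c d :=
    ContinuousOn.intervalIntegrable (by rw [uIcc_of_le hcd.le]; exact hKcont)
  have hJint : IntervalIntegrable J volume c d := by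
    have h := (hfxint.const_mul (b - a)).sub hKint
    have he : (fun s => (b - a) * f x s - K s) = J := by
      funext s; simp only [hK]; ring
    rwa [he] at h
  -- the identity
  have hiden : f x y - (1 / (b - a)) * (∫ t in a..b, f t y) -
      (1 / (d - c)) * (∫ s in c..d, f x s) +
      (1 / ((b - a) * (d - c))) * (∫ t in a..b, ∫ s in c..d, f t s)
      = (1 / ((b - a) * (d - c))) * ∫ s in c..d, (K y - K s) := by
    rw [integral_sub intervalIntegrable_const hKint, intervalIntegral.integral_const,
      smul_eq_mul]
    have hKsplit : (∫ s in c..d, K s) = (b - a) * (∫ s in c..d, f x s) - ∫ s in c..d, J s := by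
      simp only [hK]
      rw [integral_sub (hfxint.const_mul _) hJint, intervalIntegral.integral_const_mul]
    rw [hKsplit, ← ostrowski_aux_fubini hab.le hcd.le f hfc]
    simp only [hK, hJ]
    field_simp
    ring
  rw [hiden]
  -- final bound
  have hbint2 : IntervalIntegrable (fun s => M * C1 * |y - s|) volume c d :=
    (continuous_const.mul (continuous_const.sub continuous_id).abs).intervalIntegrable _ _
  have hle2 := intervalIntegral.norm_integral_le_of_norm_le
    (f := fun s => K y - K s) (g := fun s => M * C1 * |y - s|) (μ := volume) (a := c) (b := d) hcd.le
    (Filter.Eventually.of_forall (fun s hs => by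
      have hsmem : s ∈ Icc c d := Ioc_subset_Icc_self hs
      simpa [Real.norm_eq_abs] using key s hsmem y hy))
    hbint2
  have hval : (∫ s in c..d, M * C1 * |y - s|) = M * C1 * C2 := by
    rw [intervalIntegral.integral_const_mul, ostrowski_aux_abs_integral hy]
  rw [abs_mul, abs_of_nonneg (le_of_lt (by positivity : (0:ℝ) < 1 / ((b - a) * (d - c))))]
  calc 1 / ((b - a) * (d - c)) * |(∫ s in c..d, (K y - K s))|
      ≤ 1 / ((b - a) * (d - c)) * (M * C1 * C2) := by
        apply mul_le_mul_of_nonneg_left _ (le_of_lt (by positivity))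
        calc |(∫ s in c..d, (K y - K s))| ≤ |(∫ s in c..d, M * C1 * |y - s|)| := hle2.trans (le_abs_self _)
          _ = M * C1 * C2 := by rw [hval, abs_of_nonneg (by positivity)]
    _ = C1 * C2 * M / ((b - a) * (d - c)) := by ring
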